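/- arXiv:1511.03633 — 5 statements merged into one kernel-verified Lean document; each statement's English description precedes it below -/
import Mathlib

section
/- Let λ > 0 and f ∈ C⁰[a,b]. Suppose P = [a = t₀ < t₁ < ⋯ < t_k < t_{k+1} = b] is a partition of [a,b] such that Φ_{[a,b],λ,P}(f) ≥ Φ_{[a,b],λ,Q}(f) for every partition Q with |Q| ≤ |P|. Then: (a) if a < t_{j−1} and [t_{j−1},t_j] is an uptick (resp. downtick), then f attains its minimum (resp. maximum) on [t_{j−1},t_j] at t_{j−1}; (b) if t_j < b and [t_{j−1},t_j] is an uptick (resp. downtick), then f attains its maximum (resp. minimum) on [t_{j−1},t_j] at t_j. -/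
open scoped BigOperators ENNReal
open MeasureTheory Set Filter

/-- A partition `a = t₀ < t₁ < ⋯ < t_k < t_{k+1} = b` of `[a,b]` with `k` interior points. -/
structure RTVPartition (a b : ℝ) where
  k : ℕ
  t : ℕ → ℝ
  ht0 : t 0 = a
  htlast : t (k + 1) = b
  hmono : ∀ i, i ≤ k → t i < t (i + 1)

/-- `Φ_{[a,b],λ,P}(f) = ∑_{i=1}^{k+1} |f(t_i) − f(t_{i−1})| − λ·|P|`. -/
noncomputable def phiP (lam a b : ℝ) (f : ℝ → ℝ) (P : RTVPartition a b) : ℝ :=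
  (∑ i ∈ Finset.range (P.k + 1), |f (P.t (i + 1)) - f (P.t i)|) - lam * P.k

/-- The regularized total variation `Φ_{[a,b],λ}(f) = sup_P Φ_{[a,b],λ,P}(f)`. -/
noncomputable def phiRTV (lam a b : ℝ) (f : ℝ → ℝ) : ℝ :=
  ⨆ P : RTVPartition a b, phiP lam a b f P

lemma RTV.replace (lam a b : ℝ) (f : ℝ → ℝ) (P : RTVPartition a b) (m : ℕ)
    (hm : m + 1 ≤ P.k) (x : ℝ) (hx1 : P.t m < x) (hx2 : x < P.t (m + 2)) :
    ∃ Q : RTVPartition a b, Q.k = P.k ∧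
      phiP lam a b f Q = phiP lam a b f P
        - |f (P.t (m + 1)) - f (P.t m)| - |f (P.t (m + 2)) - f (P.t (m + 1))|
        + |f x - f (P.t m)| + |f (P.t (m + 2)) - f x| := by
  obtain ⟨n, t, ht0, htlast, hmono⟩ := P
  simp only at hm hx1 hx2 ⊢
  refine ⟨⟨n, fun i => if i = m + 1 then x else t i, ?_, ?_, ?_⟩, rfl, ?_⟩
  · show (if (0 : ℕ) = m + 1 then x else t 0) = a
    rw [if_neg (by omega)]; exact ht0
  · show (if (n + 1 : ℕ) = m + 1 then x else t (n + 1)) = b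
    rw [if_neg (by omega)]; exact htlast
  · intro i hi
    show (if i = m + 1 then x else t i) < (if i + 1 = m + 1 then x else t (i + 1))
    by_cases h1 : i = m + 1
    · rw [if_pos h1, if_neg (by omega)]
      subst h1; exact hx2
    · by_cases h2 : i + 1 = m + 1
      · have h3 : i = m := by omega
        rw [if_neg h1, if_pos h2, h3]; exact hx1
      · rw [if_neg h1, if_neg h2]; exact hmono i hi
  · simp only [phiP]
    have h1 : m ∈ (Finset.range (n + 1)).erase (m + 1) := by
      simp only [Finset.mem_erase, Finset.mem_range]; omega
    have h2 : m + 1 ∈ Finset.range (n + 1) := by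
      simp only [Finset.mem_range]; omega
    have key : ∀ T : ℕ → ℝ, ∑ i ∈ Finset.range (n + 1), T i
        = ∑ i ∈ ((Finset.range (n + 1)).erase (m + 1)).erase m, T i + T m + T (m + 1) := by
      intro T
      rw [Finset.sum_erase_add _ _ h1, Finset.sum_erase_add _ _ h2]
    have hcong : ∑ i ∈ ((Finset.range (n + 1)).erase (m + 1)).erase m,
        |f (if i + 1 = m + 1 then x else t (i + 1)) - f (if i = m + 1 then x else t i)|
        = ∑ i ∈ ((Finset.range (n + 1)).erase (m + 1)).erase m, |f (t (i + 1)) - f (t i)| := by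
      refine Finset.sum_congr rfl fun i hi => ?_
      simp only [Finset.mem_erase, Finset.mem_range] at hi
      rw [if_neg (by omega), if_neg (by omega)]
    show (∑ i ∈ Finset.range (n + 1),
        |f (if i + 1 = m + 1 then x else t (i + 1)) - f (if i = m + 1 then x else t i)|)
        - lam * n = _
    rw [key (fun i =>
        |f (if i + 1 = m + 1 then x else t (i + 1)) - f (if i = m + 1 then x else t i)|),
      key (fun i => |f (t (i + 1)) - f (t i)|)]
    simp only
    rw [hcong]
    have hne1 : ¬ (m = m + 1) := by omega
    have hne2 : ¬ (m + 1 + 1 = m + 1) := by omega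
    simp only [if_true, if_neg hne1, if_neg hne2]
    have h3 : t (m + 1 + 1) = t (m + 2) := rfl
    rw [h3]
    ring

lemma RTV.drop (lam a b : ℝ) (f : ℝ → ℝ) (P : RTVPartition a b) (m : ℕ)
    (hm : m + 1 ≤ P.k) :
    ∃ Q : RTVPartition a b, Q.k ≤ P.k ∧
      phiP lam a b f Q = phiP lam a b f P + lam
        - |f (P.t (m + 1)) - f (P.t m)| - |f (P.t (m + 2)) - f (P.t (m + 1))|
        + |f (P.t (m + 2)) - f (P.t m)| := by
  obtain ⟨n, t, ht0, htlast, hmono⟩ := P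
  simp only at hm ⊢
  obtain ⟨n', rfl⟩ : ∃ n', n = n' + 1 := ⟨n - 1, by omega⟩
  refine ⟨⟨n', fun i => if i ≤ m then t i else t (i + 1), ?_, ?_, ?_⟩, Nat.le_succ n', ?_⟩
  · show (if (0 : ℕ) ≤ m then t 0 else t 1) = a
    rw [if_pos (by omega)]; exact ht0
  · show (if (n' + 1 : ℕ) ≤ m then t (n' + 1) else t (n' + 1 + 1)) = b
    rw [if_neg (by omega)]; exact htlast
  · intro i hi
    show (if i ≤ m then t i else t (i + 1)) < (if i + 1 ≤ m then t (i + 1) else t (i + 1 + 1))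
    by_cases h1 : i + 1 ≤ m
    · rw [if_pos (by omega), if_pos h1]; exact hmono i (by omega)
    · by_cases h2 : i ≤ m
      · have h3 : i = m := by omega
        rw [if_pos h2, if_neg h1, h3]
        exact lt_trans (hmono m (by omega)) (hmono (m + 1) (by omega))
      · rw [if_neg h2, if_neg h1]
        exact hmono (i + 1) (by omega)
  · simp only [phiP]
    have hS : ∑ i ∈ Finset.range (n' + 1),
        |f (if i + 1 ≤ m then t (i + 1) else t (i + 1 + 1)) - f (if i ≤ m then t i else t (i + 1))|
        = (∑ i ∈ Finset.range m, |f (t (i + 1)) - f (t i)|) + |f (t (m + 2)) - f (t m)|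
          + ∑ i ∈ Finset.Ico (m + 1) (n' + 1), |f (t (i + 1 + 1)) - f (t (i + 1))| := by
      rw [Finset.range_eq_Ico, ← Finset.sum_Ico_consecutive _ (by omega : 0 ≤ m + 1)
        (by omega : m + 1 ≤ n' + 1), ← Finset.range_eq_Ico, Finset.sum_range_succ]
      congr 1
      · congr 1
        · refine Finset.sum_congr rfl fun i hi => ?_
          simp only [Finset.mem_range] at hi
          rw [if_pos (by omega), if_pos (by omega)]
        · rw [if_pos le_rfl, if_neg (by omega)]
      · refine Finset.sum_congr rfl fun i hi => ?_
        simp only [Finset.mem_Ico] at hi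
        rw [if_neg (by omega), if_neg (by omega)]
    have hP : ∑ i ∈ Finset.range (n' + 1 + 1), |f (t (i + 1)) - f (t i)|
        = (∑ i ∈ Finset.range m, |f (t (i + 1)) - f (t i)|)
          + |f (t (m + 1)) - f (t m)| + |f (t (m + 2)) - f (t (m + 1))|
          + ∑ i ∈ Finset.Ico (m + 2) (n' + 2), |f (t (i + 1)) - f (t i)| := by
      rw [Finset.range_eq_Ico]
      rw [← Finset.sum_Ico_consecutive _ (by omega : 0 ≤ m + 2) (by omega : m + 2 ≤ n' + 2)]
      rw [← Finset.range_eq_Ico]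
      rw [Finset.sum_range_succ]
      rw [Finset.sum_range_succ]
    have hshift : ∑ i ∈ Finset.Ico (m + 1) (n' + 1), |f (t (i + 1 + 1)) - f (t (i + 1))|
        = ∑ i ∈ Finset.Ico (m + 2) (n' + 2), |f (t (i + 1)) - f (t i)| := by
      rw [Finset.sum_Ico_eq_sum_range, Finset.sum_Ico_eq_sum_range]
      refine Finset.sum_congr (by congr 1; omega) fun i _ => ?_
      have e1 : m + 1 + i + 1 + 1 = m + 2 + i + 1 := by omega
      have e2 : m + 1 + i + 1 = m + 2 + i := by omega
      rw [e1, e2]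
    show (∑ i ∈ Finset.range (n' + 1),
        |f (if i + 1 ≤ m then t (i + 1) else t (i + 1 + 1)) - f (if i ≤ m then t i else t (i + 1))|)
        - lam * n' = (∑ i ∈ Finset.range (n' + 1 + 1), |f (t (i + 1)) - f (t i)|)
          - lam * ((n' + 1 : ℕ) : ℝ) + lam - _ - _ + _
    rw [hS, hP, hshift]
    push_cast
    ring

lemma RTV.aux_up (lam a b : ℝ) (hlam : 0 < lam) (f : ℝ → ℝ) (P : RTVPartition a b)
    (hopt : ∀ Q : RTVPartition a b, Q.k ≤ P.k → phiP lam a b f Q ≤ phiP lam a b f P)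
    (j : ℕ) (hj1 : 1 ≤ j) (hjk : j ≤ P.k + 1) (hup : f (P.t (j - 1)) < f (P.t j)) :
    (a < P.t (j - 1) → ∀ x ∈ Icc (P.t (j - 1)) (P.t j), f (P.t (j - 1)) ≤ f x) ∧
    (P.t j < b → ∀ x ∈ Icc (P.t (j - 1)) (P.t j), f x ≤ f (P.t j)) := by
  constructor
  · intro ha x hx
    have hj2 : 2 ≤ j := by
      by_contra h
      have : j = 1 := by omega
      subst this
      simp only [Nat.sub_self] at ha
      rw [P.ht0] at ha
      exact lt_irrefl a ha
    obtain ⟨i, rfl⟩ : ∃ i, j = i + 2 := ⟨j - 2, by omega⟩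
    have hsub : i + 2 - 1 = i + 1 := rfl
    rw [hsub] at hup hx ⊢
    have hm : i + 1 ≤ P.k := by omega
    -- step 1: f (t (i+1)) ≤ f (t i)
    have hAB : f (P.t (i + 1)) ≤ f (P.t i) := by
      by_contra h
      push_neg at h
      obtain ⟨Q, hQk, hQphi⟩ := RTV.drop lam a b f P i hm
      have hle := hopt Q hQk
      rw [hQphi] at hle
      have e1 : |f (P.t (i + 1)) - f (P.t i)| = f (P.t (i + 1)) - f (P.t i) :=
        abs_of_nonneg (by linarith)
      have e2 : |f (P.t (i + 2)) - f (P.t (i + 1))| = f (P.t (i + 2)) - f (P.t (i + 1)) :=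
        abs_of_nonneg (by linarith)
      have e3 : f (P.t (i + 2)) - f (P.t i) ≤ |f (P.t (i + 2)) - f (P.t i)| := le_abs_self _
      linarith
    -- step 2
    by_contra hX
    push_neg at hX
    have hx1 : P.t i < x := lt_of_lt_of_le (P.hmono i (by omega)) hx.1
    have hx2 : x < P.t (i + 2) := by
      rcases lt_or_eq_of_le hx.2 with h | h
      · exact h
      · rw [h] at hX; linarith
    obtain ⟨Q, hQk, hQphi⟩ := RTV.replace lam a b f P i hm x hx1 hx2
    have hle := hopt Q (le_of_eq hQk)
    rw [hQphi] at hle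
    have e1 : |f (P.t (i + 1)) - f (P.t i)| = f (P.t i) - f (P.t (i + 1)) := by
      rw [abs_of_nonpos (by linarith)]; ring
    have e2 : |f (P.t (i + 2)) - f (P.t (i + 1))| = f (P.t (i + 2)) - f (P.t (i + 1)) :=
      abs_of_nonneg (by linarith)
    have e3 : f (P.t i) - f x ≤ |f x - f (P.t i)| := by
      rw [abs_sub_comm]; exact le_abs_self _
    have e4 : f (P.t (i + 2)) - f x ≤ |f (P.t (i + 2)) - f x| := le_abs_self _
    linarith
  · intro hb x hx
    have hjle : j ≤ P.k := by
      by_contra h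
      have : j = P.k + 1 := by omega
      rw [this, P.htlast] at hb
      exact lt_irrefl b hb
    obtain ⟨i, rfl⟩ : ∃ i, j = i + 1 := ⟨j - 1, by omega⟩
    simp only [Nat.add_sub_cancel] at hup hx
    have hm : i + 1 ≤ P.k := hjle
    -- step 1: f (t (i+2)) ≤ f (t (i+1))
    have hDC : f (P.t (i + 2)) ≤ f (P.t (i + 1)) := by
      by_contra h
      push_neg at h
      obtain ⟨Q, hQk, hQphi⟩ := RTV.drop lam a b f P i hm
      have hle := hopt Q hQk
      rw [hQphi] at hle
      have e1 : |f (P.t (i + 1)) - f (P.t i)| = f (P.t (i + 1)) - f (P.t i) :=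
        abs_of_nonneg (by linarith)
      have e2 : |f (P.t (i + 2)) - f (P.t (i + 1))| = f (P.t (i + 2)) - f (P.t (i + 1)) :=
        abs_of_nonneg (by linarith)
      have e3 : f (P.t (i + 2)) - f (P.t i) ≤ |f (P.t (i + 2)) - f (P.t i)| := le_abs_self _
      linarith
    -- step 2
    by_contra hX
    push_neg at hX
    have hx1 : P.t i < x := by
      rcases lt_or_eq_of_le hx.1 with h | h
      · exact h
      · rw [← h] at hX; linarith
    have hx2 : x < P.t (i + 2) := lt_of_le_of_lt hx.2 (P.hmono (i + 1) hm)
    obtain ⟨Q, hQk, hQphi⟩ := RTV.replace lam a b f P i hm x hx1 hx2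
    have hle := hopt Q (le_of_eq hQk)
    rw [hQphi] at hle
    have e1 : |f (P.t (i + 1)) - f (P.t i)| = f (P.t (i + 1)) - f (P.t i) :=
      abs_of_nonneg (by linarith)
    have e2 : |f (P.t (i + 2)) - f (P.t (i + 1))| = f (P.t (i + 1)) - f (P.t (i + 2)) := by
      rw [abs_of_nonpos (by linarith)]; ring
    have e3 : f x - f (P.t i) ≤ |f x - f (P.t i)| := le_abs_self _
    have e4 : f x - f (P.t (i + 2)) ≤ |f (P.t (i + 2)) - f x| := by
      rw [abs_sub_comm]; exact le_abs_self _
    linarith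

/-- If `P` maximizes `Φ_{[a,b],λ,·}(f)` among partitions `Q` with `|Q| ≤ |P|`, then:
(a) if `a < t_{j−1}` and `[t_{j−1},t_j]` is an uptick (resp. downtick), `f` attains its
minimum (resp. maximum) on `[t_{j−1},t_j]` at `t_{j−1}`; (b) if `t_j < b` and `[t_{j−1},t_j]`
is an uptick (resp. downtick), `f` attains its maximum (resp. minimum) on `[t_{j−1},t_j]`
at `t_j`. -/
theorem optimal_partition_minmax (lam a b : ℝ) (hlam : 0 < lam) (f : ℝ → ℝ)
    (hf : ContinuousOn f (Icc a b)) (P : RTVPartition a b)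
    (hopt : ∀ Q : RTVPartition a b, Q.k ≤ P.k → phiP lam a b f Q ≤ phiP lam a b f P)
    (j : ℕ) (hj1 : 1 ≤ j) (hjk : j ≤ P.k + 1) :
    (a < P.t (j - 1) →
      (f (P.t (j - 1)) < f (P.t j) →
        ∀ x ∈ Icc (P.t (j - 1)) (P.t j), f (P.t (j - 1)) ≤ f x) ∧
      (f (P.t j) < f (P.t (j - 1)) →
        ∀ x ∈ Icc (P.t (j - 1)) (P.t j), f x ≤ f (P.t (j - 1)))) ∧
    (P.t j < b →
      (f (P.t (j - 1)) < f (P.t j) →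
        ∀ x ∈ Icc (P.t (j - 1)) (P.t j), f x ≤ f (P.t j)) ∧
      (f (P.t j) < f (P.t (j - 1)) →
        ∀ x ∈ Icc (P.t (j - 1)) (P.t j), f (P.t j) ≤ f x)) := by
  have hneg : ∀ Q : RTVPartition a b, phiP lam a b (fun y => -f y) Q = phiP lam a b f Q := by
    intro Q
    unfold phiP
    congr 1
    refine Finset.sum_congr rfl fun i _ => ?_
    rw [show -f (Q.t (i + 1)) - -f (Q.t i) = -(f (Q.t (i + 1)) - f (Q.t i)) by ring, abs_neg]
  have hopt' : ∀ Q : RTVPartition a b, Q.k ≤ P.k →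
      phiP lam a b (fun y => -f y) Q ≤ phiP lam a b (fun y => -f y) P := by
    intro Q hQ
    rw [hneg, hneg]
    exact hopt Q hQ
  refine ⟨fun ha => ⟨fun hup => (RTV.aux_up lam a b hlam f P hopt j hj1 hjk hup).1 ha,
      fun hdown => fun x hx => ?_⟩,
    fun hb => ⟨fun hup => (RTV.aux_up lam a b hlam f P hopt j hj1 hjk hup).2 hb,
      fun hdown => fun x hx => ?_⟩⟩
  · have := (RTV.aux_up lam a b hlam (fun y => -f y) P hopt' j hj1 hjk
      (by simpa using hdown)).1 ha x hx
    simpa using this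
  · have := (RTV.aux_up lam a b hlam (fun y => -f y) P hopt' j hj1 hjk
      (by simpa using hdown)).2 hb x hx
    simpa using this
end

section
/- Let λ > 0 and f ∈ C⁰[a,b]. Suppose P = [a = t₀ < t₁ < ⋯ < t_k < t_{k+1} = b] is a partition of [a,b] such that Φ_{[a,b],λ,P}(f) ≥ Φ_{[a,b],λ,Q}(f) for every partition Q with |Q| ≤ |P|. Then for every index j with a < t_{j−1} and t_j < b, one has |f(t_j) − f(t_{j−1})| ≥ λ. -/
open scoped BigOperators ENNReal
open MeasureTheory Set Filter

lemma sum_skip (g g' : ℕ → ℝ) (p r m : ℕ)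
    (h1 : ∀ i, i < p → g' i = g i) (h2 : ∀ i, p < i → g' i = g (i + r)) :
    ∑ i ∈ Finset.range (p + 1 + m), g' i
      = (∑ i ∈ Finset.range p, g i) + g' p
        + ∑ i ∈ Finset.Ico (p + r + 1) (p + r + 1 + m), g i := by
  induction m with
  | zero =>
      simp only [Nat.add_zero, Finset.Ico_self, Finset.sum_empty, add_zero]
      rw [Finset.sum_range_succ]
      congr 1
      exact Finset.sum_congr rfl (fun i hi => h1 i (Finset.mem_range.mp hi))
  | succ n ih =>
      rw [show p + 1 + (n + 1) = (p + 1 + n) + 1 from rfl, Finset.sum_range_succ, ih,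
        show p + r + 1 + (n + 1) = (p + r + 1 + n) + 1 from rfl,
        Finset.sum_Ico_succ_top (by omega : p + r + 1 ≤ p + r + 1 + n),
        h2 (p + 1 + n) (by omega), show p + 1 + n + r = p + r + 1 + n by ring]
      ring

lemma range_split (g : ℕ → ℝ) (p q m : ℕ) (hpq : p ≤ q) :
    ∑ i ∈ Finset.range (q + m), g i
      = (∑ i ∈ Finset.range q, g i) + ∑ i ∈ Finset.Ico q (q + m), g i := by
  rw [Finset.range_eq_Ico, Finset.range_eq_Ico]
  exact (Finset.sum_Ico_consecutive g (Nat.zero_le q) (by omega : q ≤ q + m)).symm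

lemma aux_remove_one (lam a b : ℝ) (f : ℝ → ℝ) (P : RTVPartition a b) (p : ℕ)
    (hp : p + 1 ≤ P.k)
    (hopt : ∀ Q : RTVPartition a b, Q.k ≤ P.k → phiP lam a b f Q ≤ phiP lam a b f P) :
    lam ≤ |f (P.t (p + 1)) - f (P.t p)| + |f (P.t (p + 2)) - f (P.t (p + 1))|
        - |f (P.t (p + 2)) - f (P.t p)| := by
  obtain ⟨m, hm⟩ : ∃ m, P.k = p + 1 + m := ⟨P.k - (p + 1), by omega⟩
  set t' : ℕ → ℝ := fun i => if i ≤ p then P.t i else P.t (i + 1) with ht'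
  have ht'0 : t' 0 = a := by simp [ht', P.ht0]
  have ht'last : t' (p + m + 1) = b := by
    simp only [ht', if_neg (by omega : ¬ (p + m + 1 ≤ p))]
    rw [show p + m + 1 + 1 = P.k + 1 by omega]; exact P.htlast
  have ht'mono : ∀ i, i ≤ p + m → t' i < t' (i + 1) := by
    intro i hi
    simp only [ht']
    rcases lt_trichotomy i p with h | h | h
    · rw [if_pos (by omega), if_pos (by omega)]; exact P.hmono i (by omega)
    · subst h
      rw [if_pos le_rfl, if_neg (by omega)]
      exact lt_trans (P.hmono i (by omega)) (P.hmono (i + 1) (by omega))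
    · rw [if_neg (by omega), if_neg (by omega)]; exact P.hmono (i + 1) (by omega)
  have hQ := hopt ⟨p + m, t', ht'0, ht'last, ht'mono⟩ (by simpa using by omega)
  set g : ℕ → ℝ := fun i => |f (P.t (i + 1)) - f (P.t i)| with hg
  have hsum : ∑ i ∈ Finset.range (p + m + 1), |f (t' (i + 1)) - f (t' i)|
      = (∑ i ∈ Finset.range p, g i) + |f (P.t (p + 2)) - f (P.t p)|
        + ∑ i ∈ Finset.Ico (p + 2) (p + 2 + m), g i := by
    rw [show p + m + 1 = p + 1 + m by ring]
    have := sum_skip g (fun i => |f (t' (i + 1)) - f (t' i)|) p 1 m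
      (fun i hi => by simp only [ht', hg, if_pos (by omega : i ≤ p),
        if_pos (by omega : i + 1 ≤ p)])
      (fun i hi => by simp only [ht', hg, if_neg (by omega : ¬ i ≤ p),
        if_neg (by omega : ¬ i + 1 ≤ p)])
    rw [this]
    simp only [ht', if_pos le_rfl, if_neg (by omega : ¬ p + 1 ≤ p)]
  have hS : ∑ i ∈ Finset.range (P.k + 1), g i
      = (∑ i ∈ Finset.range p, g i) + g p + g (p + 1)
        + ∑ i ∈ Finset.Ico (p + 2) (p + 2 + m), g i := by
    rw [show P.k + 1 = (p + 2) + m by omega, range_split g p (p + 2) m (by omega),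
      Finset.sum_range_succ, Finset.sum_range_succ]
  simp only [phiP] at hQ
  rw [hsum] at hQ
  rw [hS] at hQ
  have hc1 : ((p + m : ℕ) : ℝ) = (p : ℝ) + m := by push_cast; ring
  have hc2 : ((P.k : ℕ) : ℝ) = (p : ℝ) + 1 + m := by rw [hm]; push_cast; ring
  simp only [hg] at hQ ⊢
  rw [hc1, hc2] at hQ
  linarith

lemma aux_remove_two (lam a b : ℝ) (f : ℝ → ℝ) (P : RTVPartition a b) (p : ℕ)
    (hp : p + 2 ≤ P.k)
    (hopt : ∀ Q : RTVPartition a b, Q.k ≤ P.k → phiP lam a b f Q ≤ phiP lam a b f P) :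
    lam + lam ≤ |f (P.t (p + 1)) - f (P.t p)| + |f (P.t (p + 2)) - f (P.t (p + 1))|
        + |f (P.t (p + 3)) - f (P.t (p + 2))| - |f (P.t (p + 3)) - f (P.t p)| := by
  obtain ⟨m, hm⟩ : ∃ m, P.k = p + 2 + m := ⟨P.k - (p + 2), by omega⟩
  set t' : ℕ → ℝ := fun i => if i ≤ p then P.t i else P.t (i + 2) with ht'
  have ht'0 : t' 0 = a := by simp [ht', P.ht0]
  have ht'last : t' (p + m + 1) = b := by
    simp only [ht', if_neg (by omega : ¬ (p + m + 1 ≤ p))]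
    rw [show p + m + 1 + 2 = P.k + 1 by omega]; exact P.htlast
  have ht'mono : ∀ i, i ≤ p + m → t' i < t' (i + 1) := by
    intro i hi
    simp only [ht']
    rcases lt_trichotomy i p with h | h | h
    · rw [if_pos (by omega), if_pos (by omega)]; exact P.hmono i (by omega)
    · subst h
      rw [if_pos le_rfl, if_neg (by omega)]
      exact lt_trans (P.hmono i (by omega))
        (lt_trans (P.hmono (i + 1) (by omega)) (P.hmono (i + 2) (by omega)))
    · rw [if_neg (by omega), if_neg (by omega)]; exact P.hmono (i + 2) (by omega)
  have hQ := hopt ⟨p + m, t', ht'0, ht'last, ht'mono⟩ (by simpa using by omega)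
  set g : ℕ → ℝ := fun i => |f (P.t (i + 1)) - f (P.t i)| with hg
  have hsum : ∑ i ∈ Finset.range (p + m + 1), |f (t' (i + 1)) - f (t' i)|
      = (∑ i ∈ Finset.range p, g i) + |f (P.t (p + 3)) - f (P.t p)|
        + ∑ i ∈ Finset.Ico (p + 3) (p + 3 + m), g i := by
    rw [show p + m + 1 = p + 1 + m by ring]
    have := sum_skip g (fun i => |f (t' (i + 1)) - f (t' i)|) p 2 m
      (fun i hi => by simp only [ht', hg, if_pos (by omega : i ≤ p),
        if_pos (by omega : i + 1 ≤ p)])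
      (fun i hi => by
        simp only [ht', hg, if_neg (by omega : ¬ i ≤ p), if_neg (by omega : ¬ i + 1 ≤ p)])
    rw [this]
    simp only [ht', if_pos le_rfl, if_neg (by omega : ¬ p + 1 ≤ p)]
  have hS : ∑ i ∈ Finset.range (P.k + 1), g i
      = (∑ i ∈ Finset.range p, g i) + g p + g (p + 1) + g (p + 2)
        + ∑ i ∈ Finset.Ico (p + 3) (p + 3 + m), g i := by
    rw [show P.k + 1 = (p + 3) + m by omega, range_split g p (p + 3) m (by omega),
      Finset.sum_range_succ, Finset.sum_range_succ, Finset.sum_range_succ]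
  simp only [phiP] at hQ
  rw [hsum] at hQ
  rw [hS] at hQ
  have hc1 : ((p + m : ℕ) : ℝ) = (p : ℝ) + m := by push_cast; ring
  have hc2 : ((P.k : ℕ) : ℝ) = (p : ℝ) + 2 + m := by rw [hm]; push_cast; ring
  simp only [hg] at hQ ⊢
  rw [hc1, hc2] at hQ
  linarith

/-- If `P` maximizes `Φ_{[a,b],λ,·}(f)` among partitions `Q` with `|Q| ≤ |P|`, then for every
index `j` with `a < t_{j−1}` and `t_j < b`, one has `|f(t_j) − f(t_{j−1})| ≥ λ`. -/
theorem optimal_partition_interior_jump (lam a b : ℝ) (hlam : 0 < lam) (f : ℝ → ℝ)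
    (hf : ContinuousOn f (Icc a b)) (P : RTVPartition a b)
    (hopt : ∀ Q : RTVPartition a b, Q.k ≤ P.k → phiP lam a b f Q ≤ phiP lam a b f P)
    (j : ℕ) (hj1 : 1 ≤ j) (hjk : j ≤ P.k + 1)
    (hleft : a < P.t (j - 1)) (hright : P.t j < b) :
    lam ≤ |f (P.t j) - f (P.t (j - 1))| := by
  have hj2 : 2 ≤ j := by
    by_contra h
    have : j = 1 := by omega
    subst this
    simp only [Nat.sub_self, P.ht0] at hleft
    exact lt_irrefl a hleft
  obtain ⟨p, rfl⟩ : ∃ p, j = p + 2 := ⟨j - 2, by omega⟩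
  have hpk : p + 2 ≤ P.k := by
    by_contra h
    have : p + 2 = P.k + 1 := by omega
    rw [this, P.htlast] at hright
    exact lt_irrefl b hright
  rw [show p + 2 - 1 = p + 1 from rfl]
  have h1 := aux_remove_one lam a b f P p (by omega) hopt
  have h2 := aux_remove_one lam a b f P (p + 1) (by omega) hopt
  have h3 := aux_remove_two lam a b f P p hpk hopt
  rw [show p + 1 + 1 = p + 2 from rfl, show p + 1 + 2 = p + 3 from rfl] at h2
  rcases abs_cases (f (P.t (p + 1)) - f (P.t p)) with ⟨e1, s1⟩ | ⟨e1, s1⟩ <;>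
  rcases abs_cases (f (P.t (p + 2)) - f (P.t (p + 1))) with ⟨e2, s2⟩ | ⟨e2, s2⟩ <;>
  rcases abs_cases (f (P.t (p + 2)) - f (P.t p)) with ⟨e3, s3⟩ | ⟨e3, s3⟩ <;>
  rcases abs_cases (f (P.t (p + 3)) - f (P.t (p + 2))) with ⟨e4, s4⟩ | ⟨e4, s4⟩ <;>
  rcases abs_cases (f (P.t (p + 3)) - f (P.t (p + 1))) with ⟨e5, s5⟩ | ⟨e5, s5⟩ <;>
  rcases abs_cases (f (P.t (p + 3)) - f (P.t p)) with ⟨e6, s6⟩ | ⟨e6, s6⟩ <;>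
  linarith
end

section
/- Let λ > 0 and f ∈ C⁰[a,b]. Then there exists K ≥ 0 such that for every partition P of [a,b] with |P| > K there is a partition Q with |Q| ≤ |P| and Φ_{[a,b],λ,Q}(f) > Φ_{[a,b],λ,P}(f). In particular, there exists a partition P with |P| ≤ K such that Φ_{[a,b],λ,P}(f) = Φ_{[a,b],λ}(f), i.e., the supremum defining the regularized total variation is attained. -/
open scoped BigOperators ENNReal
open MeasureTheory Set Filter

private lemma step_mono {t : ℕ → ℝ} {n : ℕ} (h : ∀ i, i ≤ n → t i ≤ t (i+1)) :
    ∀ i j, i ≤ j → j ≤ n + 1 → t i ≤ t j := by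
  intro i j hij hj
  induction j with
  | zero =>
    have : i = 0 := Nat.le_zero.mp hij
    simp [this]
  | succ m ihm =>
    rcases Nat.eq_or_lt_of_le hij with h' | h'
    · simp [h']
    · exact le_trans (ihm (Nat.lt_succ_iff.mp h') (by omega)) (h m (by omega))

private lemma chain_mem_Icc {a b : ℝ} {t : ℕ → ℝ} {n : ℕ}
    (h : ∀ i, i ≤ n → t i ≤ t (i+1)) (h0 : t 0 = a) (hl : t (n+1) = b) :
    ∀ i, i ≤ n+1 → t i ∈ Icc a b := fun i hi =>
  ⟨h0 ▸ step_mono h 0 i (Nat.zero_le _) hi, hl ▸ step_mono h i (n+1) hi le_rfl⟩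

private lemma sum_merge (F G : ℕ → ℝ) (r : ℕ) :
    ∀ s : ℕ, r ≤ s →
    (∀ i, i < r → G i = F i) →
    (∀ i, r < i → i < s + 1 → G i = F (i+1)) →
    ∑ i ∈ Finset.range (s+1), G i
      = (∑ i ∈ Finset.range (s+2), F i) - F r - F (r+1) + G r := by
  refine Nat.le_induction ?_ ?_
  · intro hlow _
    have h1 : ∑ i ∈ Finset.range (r+1), G i = (∑ i ∈ Finset.range r, F i) + G r := by
      rw [Finset.sum_range_succ]
      congr 1
      exact Finset.sum_congr rfl fun i hi => hlow i (Finset.mem_range.mp hi)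
    rw [h1, Finset.sum_range_succ, Finset.sum_range_succ]
    ring
  · intro s hrs ih hlow hhigh
    have hG : G (s+1) = F (s+2) := hhigh (s+1) (by omega) (by omega)
    rw [Finset.sum_range_succ, ih hlow (fun i h1 h2 => hhigh i h1 (by omega)), hG,
      Finset.sum_range_succ (n := s+2)]
    ring

private lemma remove_point (lam a b : ℝ) (f : ℝ → ℝ) (P : RTVPartition a b)
    (r s : ℕ) (hk : P.k = s + 1) (hr : r ≤ s) :
    ∃ Q : RTVPartition a b, Q.k = s ∧
      phiP lam a b f Q = phiP lam a b f P + lam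
        + |f (P.t (r+2)) - f (P.t r)|
        - |f (P.t (r+2)) - f (P.t (r+1))| - |f (P.t (r+1)) - f (P.t r)| := by
  have hmono := P.hmono
  refine ⟨⟨s, fun i => if i < r + 1 then P.t i else P.t (i+1), ?_, ?_, ?_⟩, rfl, ?_⟩
  · simpa using P.ht0
  · have h1 : ¬ (s + 1 < r + 1) := by omega
    simp only [h1, if_false]
    rw [show s + 1 + 1 = P.k + 1 by omega]
    exact P.htlast
  · intro i hi
    by_cases h1 : i + 1 < r + 1
    · have h2 : i < r + 1 := by omega
      simpa [h1, h2] using hmono i (by omega)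
    · by_cases h2 : i < r + 1
      · have hir : i = r := by omega
        simp only [h1, h2, if_pos, if_neg, if_true, if_false]
        subst hir
        exact lt_trans (hmono i (by omega)) (hmono (i+1) (by omega))
      · simp only [h1, h2, if_neg, if_false]
        exact hmono (i+1) (by omega)
  · simp only [phiP, hk]
    have key := sum_merge (fun i => |f (P.t (i+1)) - f (P.t i)|)
      (fun i => |f ((fun i => if i < r + 1 then P.t i else P.t (i+1)) (i+1))
        - f ((fun i => if i < r + 1 then P.t i else P.t (i+1)) i)|) r s hr
      (fun i hi => by
        have h1 : i + 1 < r + 1 := by omega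
        have h2 : i < r + 1 := by omega
        simp [h1, h2])
      (fun i h1 h2 => by
        have h3 : ¬ (i + 1 < r + 1) := by omega
        have h4 : ¬ (i < r + 1) := by omega
        simp [h3, h4])
    have hGr : |f (if r + 1 < r + 1 then P.t (r+1) else P.t (r+2))
        - f (if r < r + 1 then P.t r else P.t (r+1))| = |f (P.t (r+2)) - f (P.t r)| := by
      simp
    rw [key]
    beta_reduce
    rw [hGr]
    push_cast
    ring

private lemma chain_le (lam a b : ℝ) (hlam : 0 < lam) (hab : a < b) (f : ℝ → ℝ) :
    ∀ n : ℕ, ∀ t : ℕ → ℝ, (∀ i, i ≤ n → t i ≤ t (i+1)) → t 0 = a → t (n+1) = b →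
    ∃ Q : RTVPartition a b, Q.k ≤ n ∧
      (∑ i ∈ Finset.range (n+1), |f (t (i+1)) - f (t i)|) - lam * n ≤ phiP lam a b f Q := by
  intro n
  induction n using Nat.strong_induction_on with
  | _ n ih =>
    intro t hstep h0 hl
    by_cases hstrict : ∀ i, i ≤ n → t i < t (i+1)
    · exact ⟨⟨n, t, h0, hl, hstrict⟩, le_rfl, le_of_eq rfl⟩
    · push_neg at hstrict
      obtain ⟨j, hj, hje⟩ := hstrict
      have heq : t j = t (j+1) := le_antisymm (hstep j hj) hje
      -- n cannot be 0
      rcases n with _ | m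
      · exfalso
        have : j = 0 := by omega
        subst this
        rw [h0, hl] at heq
        exact absurd heq (ne_of_lt hab)
      · by_cases hjm : j ≤ m
        · -- delete index j+1
          set t' : ℕ → ℝ := fun i => if i ≤ j then t i else t (i+1) with ht'
          have hstep' : ∀ i, i ≤ m → t' i ≤ t' (i+1) := by
            intro i hi
            by_cases h1 : i + 1 ≤ j
            · have h2 : i ≤ j := by omega
              simp only [ht', h1, h2, if_pos]
              exact hstep i (by omega)
            · by_cases h2 : i ≤ j
              · have hij : i = j := by omega
                simp only [ht', h1, h2, if_pos, if_neg, if_true, if_false]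
                subst hij
                rw [heq]
                exact hstep (i+1) (by omega)
              · simp only [ht', h1, h2, if_neg, if_false]
                exact hstep (i+1) (by omega)
          have h0' : t' 0 = a := by simp [ht', Nat.zero_le j, h0]
          have hl' : t' (m+1) = b := by
            have : ¬ (m + 1 ≤ j) := by omega
            simp only [ht', this, if_false]
            exact hl
          obtain ⟨Q, hQk, hQle⟩ := ih m (by omega) t' hstep' h0' hl'
          refine ⟨Q, by omega, le_trans ?_ hQle⟩
          have key := sum_merge (fun i => |f (t (i+1)) - f (t i)|)
            (fun i => |f (t' (i+1)) - f (t' i)|) j m hjm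
            (fun i hi => by
              have h1 : i + 1 ≤ j := by omega
              have h2 : i ≤ j := by omega
              simp [ht', h1, h2])
            (fun i h1 h2 => by
              have h3 : ¬ (i + 1 ≤ j) := by omega
              have h4 : ¬ (i ≤ j) := by omega
              simp [ht', h3, h4])
          have hGj : |f (t' (j+1)) - f (t' j)| = |f (t ((j+1)+1)) - f (t (j+1))| := by
            have h1 : ¬ (j + 1 ≤ j) := by omega
            simp only [ht', h1, if_neg, le_refl, if_pos, if_true, if_false]
            rw [heq]
          have hFj : |f (t (j+1)) - f (t j)| = 0 := by rw [heq]; simp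
          rw [key]
          beta_reduce
          rw [hGj, hFj]
          push_cast
          linarith [hlam.le]
        · -- j = m+1 : last two points coincide, drop the last
          have hjn : j = m + 1 := by omega
          rw [hjn] at heq
          have hl2 : t (m+1) = b := by rw [heq]; exact hl
          obtain ⟨Q, hQk, hQle⟩ := ih m (by omega) t (fun i hi => hstep i (by omega)) h0 hl2
          refine ⟨Q, by omega, le_trans ?_ hQle⟩
          have hFn : |f (t (m+1+1)) - f (t (m+1))| = 0 := by rw [← heq]; simp
          rw [Finset.sum_range_succ (n := m+1), hFn]
          push_cast
          linarith [hlam.le]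

private lemma exists_max_level (lam a b : ℝ) (hlam : 0 < lam) (hab : a < b) (f : ℝ → ℝ)
    (hf : ContinuousOn f (Icc a b)) (n : ℕ) :
    ∃ Q : RTVPartition a b, Q.k ≤ n ∧
      ∀ t : ℕ → ℝ, (∀ i, i ≤ n → t i ≤ t (i+1)) → t 0 = a → t (n+1) = b →
        (∑ i ∈ Finset.range (n+1), |f (t (i+1)) - f (t i)|) - lam * n ≤ phiP lam a b f Q := by
  set cl : ℕ → Fin (n+2) := fun j => ⟨min j (n+1), by omega⟩ with hcl
  set S : Set (Fin (n+2) → ℝ) :=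
    {u | (∀ i j : Fin (n+2), i ≤ j → u i ≤ u j) ∧ u (cl 0) = a ∧ u (cl (n+1)) = b} with hS
  set g : (Fin (n+2) → ℝ) → ℝ :=
    fun u => ∑ i ∈ Finset.range (n+1), |f (u (cl (i+1))) - f (u (cl i))| with hg
  -- membership in Icc
  have hmem : ∀ u ∈ S, ∀ j : Fin (n+2), u j ∈ Icc a b := by
    rintro u ⟨hmono, h0, hl⟩ j
    constructor
    · refine h0 ▸ hmono _ j ?_
      rw [Fin.le_def]
      show min 0 (n+1) ≤ (j : ℕ)
      omega
    · refine hl ▸ hmono j _ ?_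
      rw [Fin.le_def]
      show (j : ℕ) ≤ min (n+1) (n+1)
      have := j.isLt
      omega
  -- S is compact
  have hclosed : IsClosed S := by
    have : S = (⋂ (i : Fin (n+2)) (j : Fin (n+2)) (_ : i ≤ j), {u : Fin (n+2) → ℝ | u i ≤ u j})
        ∩ ({u : Fin (n+2) → ℝ | u (cl 0) = a} ∩ {u | u (cl (n+1)) = b}) := by
      ext u; simp only [hS, mem_setOf_eq, mem_inter_iff, mem_iInter]
    rw [this]
    refine IsClosed.inter ?_ (IsClosed.inter ?_ ?_)
    · exact isClosed_iInter fun i => isClosed_iInter fun j => isClosed_iInter fun _ =>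
        isClosed_le (continuous_apply i) (continuous_apply j)
    · exact isClosed_eq (continuous_apply _) continuous_const
    · exact isClosed_eq (continuous_apply _) continuous_const
  have hcompact : IsCompact S := by
    refine IsCompact.of_isClosed_subset (isCompact_Icc (a := fun _ : Fin (n+2) => a)
      (b := fun _ => b)) hclosed ?_
    intro u hu
    rw [Set.mem_Icc]
    constructor <;> intro j
    · exact (hmem u hu j).1
    · exact (hmem u hu j).2
  have hne : S.Nonempty := by
    refine ⟨fun i => if (i : ℕ) = 0 then a else b, ?_, ?_, ?_⟩
    · intro i j hij
      by_cases hi : (i : ℕ) = 0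
      · by_cases hj : (j : ℕ) = 0 <;> simp [hi, hj, hab.le]
      · have hj : ¬ (j : ℕ) = 0 := by have := Fin.le_def.mp hij; omega
        simp [hi, hj]
    · simp [hcl]
    · simp [hcl]
  have hgcont : ContinuousOn g S := by
    apply continuousOn_finset_sum
    intro i _
    apply ContinuousOn.abs
    apply ContinuousOn.sub
    · exact ContinuousOn.comp hf (continuous_apply (cl (i+1))).continuousOn
        (fun u hu => hmem u hu _)
    · exact ContinuousOn.comp hf (continuous_apply (cl i)).continuousOn
        (fun u hu => hmem u hu _)
  obtain ⟨u₀, hu₀S, hmax⟩ := hcompact.exists_isMaxOn hne hgcont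
  -- build a chain from u₀ and apply chain_le
  obtain ⟨humo, hu0a, hu0b⟩ := hu₀S
  set te : ℕ → ℝ := fun j => u₀ (cl j) with hte
  have hstep : ∀ i, i ≤ n → te i ≤ te (i+1) := by
    intro i hi
    refine humo _ _ ?_
    rw [Fin.le_def]
    show min i (n+1) ≤ min (i+1) (n+1)
    omega
  obtain ⟨Q, hQk, hQle⟩ := chain_le lam a b hlam hab f n te hstep hu0a hu0b
  refine ⟨Q, hQk, ?_⟩
  intro t ht h0 hl
  have huS : (fun i : Fin (n+2) => t (i : ℕ)) ∈ S := by
    refine ⟨?_, ?_, ?_⟩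
    · intro i j hij
      exact step_mono ht _ _ (Fin.le_def.mp hij) (by omega)
    · simp [hcl, h0]
    · simp [hcl, hl]
  have hgu : g (fun i : Fin (n+2) => t (i : ℕ)) = ∑ i ∈ Finset.range (n+1), |f (t (i+1)) - f (t i)| := by
    refine Finset.sum_congr rfl fun i hi => ?_
    have hi' : i ≤ n := by have := Finset.mem_range.mp hi; omega
    have e1 : ((cl (i+1)) : ℕ) = i + 1 := by
      show min (i+1) (n+1) = i + 1
      omega
    have e2 : ((cl i) : ℕ) = i := by
      show min i (n+1) = i
      omega
    show |f (t ((cl (i+1)) : ℕ)) - f (t ((cl i) : ℕ))| = _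
    rw [e1, e2]
  have hgte : g u₀ = ∑ i ∈ Finset.range (n+1), |f (te (i+1)) - f (te i)| := rfl
  have h2 : g (fun i : Fin (n+2) => t (i : ℕ)) ≤ g u₀ := hmax huS
  rw [hgu, hgte] at h2
  linarith

private lemma descent (lam a b δ : ℝ) (hlam : 0 < lam) (hab : a < b) (f : ℝ → ℝ)
    (hδ : 0 < δ)
    (hδf : ∀ x ∈ Icc a b, ∀ y ∈ Icc a b, |x - y| < δ → |f x - f y| < lam / 2)
    (P : RTVPartition a b) (hP : (b - a) / δ < (P.k : ℝ)) :
    ∃ Q : RTVPartition a b, Q.k < P.k ∧ phiP lam a b f P < phiP lam a b f Q := by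
  have hba : 0 < b - a := by linarith
  have hk1 : 1 ≤ P.k := by
    by_contra h
    have : P.k = 0 := by omega
    rw [this] at hP
    simp at hP
    exact absurd hP (not_lt.mpr (le_of_lt (div_pos hba hδ)))
  obtain ⟨s, hk⟩ : ∃ s, P.k = s + 1 := ⟨P.k - 1, by omega⟩
  have hweak : ∀ i, i ≤ P.k → P.t i ≤ P.t (i+1) := fun i hi => (P.hmono i hi).le
  have hIcc : ∀ i, i ≤ P.k + 1 → P.t i ∈ Icc a b := chain_mem_Icc hweak P.ht0 P.htlast
  -- pigeonhole: some interval is shorter than δ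
  have hpigeon : ∃ j, j ≤ P.k ∧ P.t (j+1) - P.t j < δ := by
    by_contra h
    push_neg at h
    have hsum : ∑ i ∈ Finset.range (P.k + 1), (P.t (i+1) - P.t i) = b - a := by
      rw [Finset.sum_range_sub, P.htlast, P.ht0]
    have hge : (↑(P.k + 1) : ℝ) * δ ≤ b - a := by
      rw [← hsum]
      calc (↑(P.k+1) : ℝ) * δ = ∑ _i ∈ Finset.range (P.k + 1), δ := by
            rw [Finset.sum_const, Finset.card_range, nsmul_eq_mul]
        _ ≤ ∑ i ∈ Finset.range (P.k + 1), (P.t (i+1) - P.t i) :=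
            Finset.sum_le_sum fun i hi => h i (by have := Finset.mem_range.mp hi; omega)
    have hlt : b - a < (P.k : ℝ) * δ := (div_lt_iff₀ hδ).mp hP
    push_cast at hge
    nlinarith [hδ]
  obtain ⟨j, hj, hshort⟩ := hpigeon
  have hfshort : |f (P.t (j+1)) - f (P.t j)| < lam / 2 := by
    apply hδf _ (hIcc (j+1) (by omega)) _ (hIcc j (by omega))
    rw [abs_of_nonneg (by linarith [hweak j hj])]
    exact hshort
  rcases Nat.eq_zero_or_pos j with hj0 | hjpos
  · -- short interval is [t 0, t 1]; remove t 1 (r = 0)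
    subst hj0
    obtain ⟨Q, hQk, hQphi⟩ := remove_point lam a b f P 0 s hk (by omega)
    refine ⟨Q, by omega, ?_⟩
    rw [hQphi]
    have htri : |f (P.t 2) - f (P.t 1)| - |f (P.t 1) - f (P.t 0)| ≤ |f (P.t 2) - f (P.t 0)| := by
      have h1 := abs_sub_le (f (P.t 2)) (f (P.t 0)) (f (P.t 1))
      have h2 : |f (P.t 0) - f (P.t 1)| = |f (P.t 1) - f (P.t 0)| := abs_sub_comm _ _
      linarith
    simp only [Nat.zero_add] at *
    linarith
  · -- short interval is [t j, t (j+1)]; remove t j (r = j - 1)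
    obtain ⟨r, hrj⟩ : ∃ r, j = r + 1 := ⟨j - 1, by omega⟩
    subst hrj
    obtain ⟨Q, hQk, hQphi⟩ := remove_point lam a b f P r s hk (by omega)
    refine ⟨Q, by omega, ?_⟩
    rw [hQphi]
    have htri : |f (P.t (r+1)) - f (P.t r)| - |f (P.t (r+2)) - f (P.t (r+1))| ≤ |f (P.t (r+2)) - f (P.t r)| := by
      have := abs_sub_le (f (P.t (r+1))) (f (P.t (r+2))) (f (P.t r))
      have h2 : |f (P.t (r+1)) - f (P.t (r+2))| = |f (P.t (r+2)) - f (P.t (r+1))| := abs_sub_comm _ _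
      linarith
    linarith


/-- There is `K ≥ 0` such that every partition with more than `K` interior points is beaten
by a partition with no more points; in particular the supremum defining the regularized
total variation is attained by some partition with at most `K` interior points. -/
theorem exists_optimal_partition (lam a b : ℝ) (hlam : 0 < lam) (hab : a < b) (f : ℝ → ℝ)
    (hf : ContinuousOn f (Icc a b)) :
    ∃ K : ℝ, 0 ≤ K ∧
      (∀ P : RTVPartition a b, K < (P.k : ℝ) →
        ∃ Q : RTVPartition a b, Q.k ≤ P.k ∧ phiP lam a b f P < phiP lam a b f Q) ∧
      ∃ P : RTVPartition a b, (P.k : ℝ) ≤ K ∧ phiP lam a b f P = phiRTV lam a b f := by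
  -- uniform continuity
  have hu := (isCompact_Icc (a := a) (b := b)).uniformContinuousOn_of_continuous hf
  rw [Metric.uniformContinuousOn_iff] at hu
  obtain ⟨δ, hδ, hδf'⟩ := hu (lam / 2) (by linarith)
  have hδf : ∀ x ∈ Icc a b, ∀ y ∈ Icc a b, |x - y| < δ → |f x - f y| < lam / 2 := by
    intro x hx y hy hxy
    have := hδf' x hx y hy (by rwa [Real.dist_eq])
    rwa [Real.dist_eq] at this
  set K : ℝ := (b - a) / δ with hK
  have hK0 : 0 ≤ K := le_of_lt (div_pos (by linarith) hδ)
  refine ⟨K, hK0, ?_, ?_⟩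
  · intro P hP
    obtain ⟨Q, hQk, hQphi⟩ := descent lam a b δ hlam hab f hδ hδf P hP
    exact ⟨Q, hQk.le, hQphi⟩
  · -- attainment
    set N : ℕ := ⌊K⌋₊ with hN
    choose Qc hQck hQc using fun n => exists_max_level lam a b hlam hab f hf n
    obtain ⟨n0, hn0mem, hn0max⟩ := Finset.exists_max_image (Finset.range (N+1))
      (fun n => phiP lam a b f (Qc n)) ⟨0, by simp⟩
    set Qs := Qc n0 with hQs
    -- every partition is dominated by Qs
    have hbound : ∀ P : RTVPartition a b, phiP lam a b f P ≤ phiP lam a b f Qs := by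
      have : ∀ m : ℕ, ∀ P : RTVPartition a b, P.k = m → phiP lam a b f P ≤ phiP lam a b f Qs := by
        intro m
        induction m using Nat.strong_induction_on with
        | _ m ih =>
          intro P hPk
          by_cases hcase : (P.k : ℝ) ≤ K
          · have hPN : P.k ≤ N := Nat.le_floor hcase
            have h1 : phiP lam a b f P ≤ phiP lam a b f (Qc P.k) :=
              hQc P.k P.t (fun i hi => (P.hmono i hi).le) P.ht0 P.htlast
            have h2 : phiP lam a b f (Qc P.k) ≤ phiP lam a b f (Qc n0) :=
              hn0max P.k (Finset.mem_range.mpr (by omega))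
            exact le_trans h1 h2
          · push_neg at hcase
            obtain ⟨Q, hQk, hQphi⟩ := descent lam a b δ hlam hab f hδ hδf P hcase
            exact le_of_lt (lt_of_lt_of_le hQphi (ih Q.k (by omega) Q rfl))
      exact fun P => this P.k P rfl
    refine ⟨Qs, ?_, ?_⟩
    · have h1 : (Qs.k : ℝ) ≤ (n0 : ℝ) := by exact_mod_cast hQck n0
      have h2 : (n0 : ℝ) ≤ (N : ℝ) := by
        have := Finset.mem_range.mp hn0mem
        exact_mod_cast by omega
      have h3 : (N : ℝ) ≤ K := Nat.floor_le hK0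
      linarith
    · haveI : Nonempty (RTVPartition a b) := ⟨Qs⟩
      refine le_antisymm ?_ (ciSup_le hbound)
      exact le_ciSup ⟨phiP lam a b f Qs, by rintro x ⟨P, rfl⟩; exact hbound P⟩ Qs
end

section
/- Let λ > 0 and f ∈ C⁰[a,b]. Suppose P = [a = t₀ < t₁ < ⋯ < t_k < t_{k+1} = b] is a partition of [a,b] such that Φ_{[a,b],λ,P}(f) = Φ_{[a,b],λ}(f) and |P| is maximal among all partitions attaining this value. If [a,t₁] is an uptick (resp. downtick), then min_{a≤x≤t₁} f(x) > f(a) − λ/2 (resp. max_{a≤x≤t₁} f(x) < f(a) + λ/2). -/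
open scoped BigOperators ENNReal
open MeasureTheory Set Filter

lemma RTVPartition.t_le {a b : ℝ} (P : RTVPartition a b) {i j : ℕ} (hij : i ≤ j)
    (hj : j ≤ P.k + 1) : P.t i ≤ P.t j := by
  induction j with
  | zero =>
      obtain rfl : i = 0 := Nat.le_zero.mp hij
      exact le_rfl
  | succ n ih =>
      rcases Nat.eq_or_lt_of_le hij with rfl | h
      · exact le_rfl
      · exact (ih (Nat.lt_succ_iff.mp h) (by omega)).trans (P.hmono n (by omega)).le

lemma RTVPartition.t_mem {a b : ℝ} (P : RTVPartition a b) {i : ℕ} (hi : i ≤ P.k + 1) :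
    P.t i ∈ Icc a b := by
  constructor
  · have h := P.t_le (Nat.zero_le i) hi
    rwa [P.ht0] at h
  · have h := P.t_le hi le_rfl
    rwa [P.htlast] at h

lemma phiP_bddAbove (lam a b : ℝ) (hlam : 0 < lam) (f : ℝ → ℝ)
    (hf : ContinuousOn f (Icc a b)) : BddAbove (Set.range (phiP lam a b f)) := by
  rcases lt_or_ge b a with hba | hab
  · refine ⟨0, ?_⟩
    rintro _ ⟨Q, rfl⟩
    exfalso
    have h1 : a < Q.t 1 := by
      have := Q.hmono 0 (Nat.zero_le _)
      rwa [Q.ht0] at this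
    have h2 : Q.t 1 ≤ b := (Q.t_mem (by omega)).2
    linarith
  · obtain ⟨M, hM⟩ := isCompact_Icc.exists_bound_of_continuousOn hf
    have hM0 : 0 ≤ M := le_trans (norm_nonneg _) (hM a ⟨le_rfl, hab⟩)
    have uc : UniformContinuousOn f (Icc a b) :=
      isCompact_Icc.uniformContinuousOn_of_continuous hf
    rw [Metric.uniformContinuousOn_iff] at uc
    obtain ⟨δ, hδ, hδ'⟩ := uc lam hlam
    refine ⟨lam + 2 * M * ((b - a) / δ), ?_⟩
    rintro _ ⟨Q, rfl⟩
    set k := Q.k with hk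
    set L := (Finset.range (k + 1)).filter (fun i => δ ≤ Q.t (i + 1) - Q.t i) with hL
    have hcard : (L.card : ℝ) * δ ≤ b - a := by
      have h1 : (L.card : ℝ) * δ = ∑ _i ∈ L, δ := by
        rw [Finset.sum_const, nsmul_eq_mul]
      have h2 : ∑ _i ∈ L, δ ≤ ∑ i ∈ L, (Q.t (i + 1) - Q.t i) := by
        apply Finset.sum_le_sum
        intro i hi
        exact (Finset.mem_filter.mp hi).2
      have h3 : ∑ i ∈ L, (Q.t (i + 1) - Q.t i) ≤
          ∑ i ∈ Finset.range (k + 1), (Q.t (i + 1) - Q.t i) := by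
        apply Finset.sum_le_sum_of_subset_of_nonneg (Finset.filter_subset _ _)
        intro i hi _
        have := Q.hmono i (by simpa using Nat.lt_succ_iff.mp (Finset.mem_range.mp hi))
        linarith
      have h4 : ∑ i ∈ Finset.range (k + 1), (Q.t (i + 1) - Q.t i) = b - a := by
        rw [Finset.sum_range_sub, Q.ht0, Q.htlast]
      linarith
    have hcard' : (L.card : ℝ) ≤ (b - a) / δ := by
      rw [le_div_iff₀ hδ]; exact hcard
    have hterm : ∀ i ∈ Finset.range (k + 1),
        |f (Q.t (i + 1)) - f (Q.t i)| ≤ lam + (if δ ≤ Q.t (i + 1) - Q.t i then 2 * M else 0) := by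
      intro i hi
      have hik : i ≤ k := Nat.lt_succ_iff.mp (Finset.mem_range.mp hi)
      have hmem1 : Q.t i ∈ Icc a b := Q.t_mem (by omega)
      have hmem2 : Q.t (i + 1) ∈ Icc a b := Q.t_mem (by omega)
      by_cases hlong : δ ≤ Q.t (i + 1) - Q.t i
      · rw [if_pos hlong]
        have := hM _ hmem1
        have := hM _ hmem2
        have := abs_sub (f (Q.t (i + 1))) (f (Q.t i))
        rw [Real.norm_eq_abs] at *
        calc |f (Q.t (i + 1)) - f (Q.t i)| ≤ |f (Q.t (i + 1))| + |f (Q.t i)| :=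
              abs_sub _ _
          _ ≤ lam + 2 * M := by linarith
      · rw [if_neg hlong]
        push_neg at hlong
        have hd : dist (Q.t (i + 1)) (Q.t i) < δ := by
          rw [Real.dist_eq, abs_of_nonneg (by linarith [Q.hmono i hik])]
          exact hlong
        have := hδ' _ hmem2 _ hmem1 hd
        rw [Real.dist_eq] at this
        linarith
    have hsum : ∑ i ∈ Finset.range (k + 1), |f (Q.t (i + 1)) - f (Q.t i)| ≤
        lam * (k + 1) + 2 * M * L.card := by
      calc ∑ i ∈ Finset.range (k + 1), |f (Q.t (i + 1)) - f (Q.t i)|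
          ≤ ∑ i ∈ Finset.range (k + 1),
              (lam + (if δ ≤ Q.t (i + 1) - Q.t i then 2 * M else 0)) :=
            Finset.sum_le_sum hterm
        _ = lam * (k + 1) + ∑ i ∈ Finset.range (k + 1),
              (if δ ≤ Q.t (i + 1) - Q.t i then 2 * M else 0) := by
            rw [Finset.sum_add_distrib, Finset.sum_const, Finset.card_range, nsmul_eq_mul]
            push_cast; ring
        _ = lam * (k + 1) + ∑ _i ∈ L, (2 * M) := by rw [Finset.sum_filter]
        _ = lam * (k + 1) + 2 * M * L.card := by
            rw [Finset.sum_const, nsmul_eq_mul]; ring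
    have h2ML : 2 * M * (L.card : ℝ) ≤ 2 * M * ((b - a) / δ) := by
      apply mul_le_mul_of_nonneg_left hcard' (by linarith)
    simp only [phiP]
    push_cast
    nlinarith [hsum]

/-- Insert a point `x` between `t 0 = a` and `t 1`. -/
def RTVPartition.insert1 {a b : ℝ} (P : RTVPartition a b) (x : ℝ) (h1 : a < x)
    (h2 : x < P.t 1) : RTVPartition a b where
  k := P.k + 1
  t := fun i => match i with
    | 0 => a
    | 1 => x
    | (n + 2) => P.t (n + 1)
  ht0 := rfl
  htlast := P.htlast
  hmono := by
    intro i hi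
    match i with
    | 0 => exact h1
    | 1 => exact h2
    | (n + 2) => exact P.hmono (n + 1) (by omega)

lemma phiP_insert1 (lam a b : ℝ) (f : ℝ → ℝ) (P : RTVPartition a b) (x : ℝ) (h1 : a < x)
    (h2 : x < P.t 1) :
    phiP lam a b f (P.insert1 x h1 h2) - phiP lam a b f P
      = |f x - f a| + |f (P.t 1) - f x| - |f (P.t 1) - f a| - lam := by
  have e1 : ∑ i ∈ Finset.range (P.k + 1 + 1),
      |f ((P.insert1 x h1 h2).t (i + 1)) - f ((P.insert1 x h1 h2).t i)|
      = |f x - f a| + |f (P.t 1) - f x|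
        + ∑ i ∈ Finset.range P.k, |f (P.t (i + 2)) - f (P.t (i + 1))| := by
    rw [Finset.sum_range_succ', Finset.sum_range_succ']
    show (∑ i ∈ Finset.range P.k, |f (P.t (i + 2)) - f (P.t (i + 1))|)
        + |f (P.t 1) - f x| + |f x - f a| = _
    ring
  have e2 : ∑ i ∈ Finset.range (P.k + 1), |f (P.t (i + 1)) - f (P.t i)|
      = |f (P.t 1) - f a| + ∑ i ∈ Finset.range P.k, |f (P.t (i + 2)) - f (P.t (i + 1))| := by
    rw [Finset.sum_range_succ', P.ht0]
    show (∑ i ∈ Finset.range P.k, |f (P.t (i + 2)) - f (P.t (i + 1))|) + |f (P.t 1) - f a| = _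
    ring
  show (∑ i ∈ Finset.range (P.k + 1 + 1),
      |f ((P.insert1 x h1 h2).t (i + 1)) - f ((P.insert1 x h1 h2).t i)|)
      - lam * ((P.k + 1 : ℕ) : ℝ)
      - ((∑ i ∈ Finset.range (P.k + 1), |f (P.t (i + 1)) - f (P.t i)|) - lam * (P.k : ℕ)) = _
  rw [e1, e2]
  push_cast
  ring

lemma uptick_key (lam a b : ℝ) (hlam : 0 < lam) (f : ℝ → ℝ)
    (hbdd : BddAbove (Set.range (phiP lam a b f))) (P : RTVPartition a b)
    (hopt : phiP lam a b f P = phiRTV lam a b f)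
    (hmax : ∀ Q : RTVPartition a b, phiP lam a b f Q = phiRTV lam a b f → Q.k ≤ P.k)
    (hup : f a < f (P.t 1)) : ∀ x ∈ Icc a (P.t 1), f a - lam / 2 < f x := by
  by_contra h
  push_neg at h
  obtain ⟨x, hx, hfx⟩ := h
  have h1 : a < x := hx.1.lt_of_ne (by rintro rfl; linarith)
  have h2 : x < P.t 1 := hx.2.lt_of_ne (by rintro rfl; linarith)
  set Q := P.insert1 x h1 h2 with hQ
  have hdiff := phiP_insert1 lam a b f P x h1 h2
  have ha1 : f a - f x ≤ |f x - f a| := by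
    rw [abs_sub_comm]; exact le_abs_self _
  have ha2 : f (P.t 1) - f x ≤ |f (P.t 1) - f x| := le_abs_self _
  have ha3 : |f (P.t 1) - f a| = f (P.t 1) - f a := abs_of_pos (by linarith)
  have hge : phiP lam a b f P ≤ phiP lam a b f Q := by
    rw [ha3] at hdiff; linarith
  have hle : phiP lam a b f Q ≤ phiRTV lam a b f := le_ciSup hbdd Q
  have hQopt : phiP lam a b f Q = phiRTV lam a b f :=
    le_antisymm hle (by rw [← hopt] at *; exact hge)
  have := hmax Q hQopt
  have : Q.k = P.k + 1 := rfl
  omega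

lemma phiP_neg (lam a b : ℝ) (f : ℝ → ℝ) :
    phiP lam a b (fun y => -f y) = phiP lam a b f := by
  funext Q
  unfold phiP
  congr 1
  apply Finset.sum_congr rfl
  intro i _
  rw [show -f (Q.t (i + 1)) - -f (Q.t i) = -(f (Q.t (i + 1)) - f (Q.t i)) by ring, abs_neg]

/-- If `P` attains `Φ_{[a,b],λ}(f)` with `|P|` maximal among all partitions attaining it, and
`[a,t₁]` is an uptick (resp. downtick), then `min_{a≤x≤t₁} f(x) > f(a) − λ/2`
(resp. `max_{a≤x≤t₁} f(x) < f(a) + λ/2`). -/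
theorem maximal_optimal_partition_first_interval (lam a b : ℝ) (hlam : 0 < lam) (f : ℝ → ℝ)
    (hf : ContinuousOn f (Icc a b)) (P : RTVPartition a b)
    (hopt : phiP lam a b f P = phiRTV lam a b f)
    (hmax : ∀ Q : RTVPartition a b, phiP lam a b f Q = phiRTV lam a b f → Q.k ≤ P.k) :
    (f a < f (P.t 1) → ∀ x ∈ Icc a (P.t 1), f a - lam / 2 < f x) ∧
    (f (P.t 1) < f a → ∀ x ∈ Icc a (P.t 1), f x < f a + lam / 2) := by
  constructor
  · intro hup
    exact uptick_key lam a b hlam f (phiP_bddAbove lam a b hlam f hf) P hopt hmax hup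
  · intro hdn x hx
    set g : ℝ → ℝ := fun y => -f y with hg
    have hfg : phiP lam a b g = phiP lam a b f := phiP_neg lam a b f
    have hrtv : phiRTV lam a b g = phiRTV lam a b f := by
      unfold phiRTV
      rw [show (fun Q : RTVPartition a b => phiP lam a b g Q)
          = (fun Q : RTVPartition a b => phiP lam a b f Q) from funext fun Q => by rw [hfg]]
    have hbddg : BddAbove (Set.range (phiP lam a b g)) := by
      rw [hfg]; exact phiP_bddAbove lam a b hlam f hf
    have hoptg : phiP lam a b g P = phiRTV lam a b g := by rw [hfg, hrtv]; exact hopt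
    have hmaxg : ∀ Q : RTVPartition a b, phiP lam a b g Q = phiRTV lam a b g → Q.k ≤ P.k := by
      intro Q hQ
      rw [hfg, hrtv] at hQ
      exact hmax Q hQ
    have hupg : g a < g (P.t 1) := by simp only [hg]; linarith
    have := uptick_key lam a b hlam g hbddg P hoptg hmaxg hupg x hx
    simp only [hg] at this
    linarith
end

section
/- Let λ > 0, let a < b < c, and let f ∈ C⁰[a,c]. Then Φ_{[a,b],λ}(f) + Φ_{[b,c],λ}(f) − λ ≤ Φ_{[a,c],λ}(f) ≤ Φ_{[a,b],λ}(f) + Φ_{[b,c],λ}(f). -/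
open scoped BigOperators ENNReal
open MeasureTheory Set Filter

lemma RTVPartition.t_mono {a b : ℝ} (P : RTVPartition a b) :
    ∀ {i j : ℕ}, i ≤ j → j ≤ P.k + 1 → P.t i ≤ P.t j := by
  intro i j hij hj
  induction j with
  | zero => simp [Nat.le_zero.mp hij]
  | succ n ih =>
    rcases Nat.lt_or_ge i (n + 1) with h | h
    · exact le_trans (ih (Nat.lt_succ_iff.mp h) (by omega)) (le_of_lt (P.hmono n (by omega)))
    · have : i = n + 1 := le_antisymm hij h
      simp [this]

lemma RTVPartition.nonempty' {a b : ℝ} (hab : a < b) : Nonempty (RTVPartition a b) :=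
  ⟨⟨0, fun i => if i = 0 then a else b, by simp, by simp, fun i hi => by
    have : i = 0 := Nat.le_zero.mp hi
    subst this
    simpa using hab⟩⟩

/-- Concatenation of partitions. -/
lemma phiP_concat (lam a b c : ℝ) (f : ℝ → ℝ) (hab : a < b) (hbc : b < c)
    (P1 : RTVPartition a b) (P2 : RTVPartition b c) :
    ∃ Q : RTVPartition a c,
      phiP lam a c f Q = phiP lam a b f P1 + phiP lam b c f P2 - lam := by
  classical
  set m := P1.k + 1 with hm
  set T : ℕ → ℝ := fun i => if i ≤ m then P1.t i else P2.t (i - m) with hT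
  have hT1 : ∀ i ≤ m, T i = P1.t i := fun i hi => if_pos hi
  have hT2 : ∀ i, T (m + i) = P2.t i := by
    intro i
    rcases Nat.eq_zero_or_pos i with h | h
    · subst h
      show T m = P2.t 0
      rw [hT1 m le_rfl, P1.htlast, P2.ht0]
    · have h1 : ¬ (m + i ≤ m) := by omega
      simp only [hT, if_neg h1]
      congr 1
      omega
  refine ⟨⟨P1.k + P2.k + 1, T, ?_, ?_, ?_⟩, ?_⟩
  · rw [hT1 0 (by omega), P1.ht0]
  · have : P1.k + P2.k + 1 + 1 = m + (P2.k + 1) := by omega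
    rw [this, hT2, P2.htlast]
  · intro i hi
    rcases Nat.lt_or_ge i m with h | h
    · rw [hT1 i (by omega), hT1 (i + 1) (by omega)]
      exact P1.hmono i (by omega)
    · have h1 : i = m + (i - m) := by omega
      have h2 : i + 1 = m + (i - m + 1) := by omega
      have e1 : T i = P2.t (i - m) := by
        have := hT2 (i - m); rwa [← h1] at this
      have e2 : T (i + 1) = P2.t (i - m + 1) := by
        have := hT2 (i - m + 1); rwa [← h2] at this
      rw [e1, e2]
      exact P2.hmono (i - m) (by omega)
  · show (∑ i ∈ Finset.range (P1.k + P2.k + 1 + 1), |f (T (i + 1)) - f (T i)|)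
        - lam * ((P1.k + P2.k + 1 : ℕ) : ℝ) = _
    have hsplit : P1.k + P2.k + 1 + 1 = m + (P2.k + 1) := by omega
    rw [hsplit, Finset.sum_range_add]
    have e1 : ∑ i ∈ Finset.range m, |f (T (i + 1)) - f (T i)| =
        ∑ i ∈ Finset.range (P1.k + 1), |f (P1.t (i + 1)) - f (P1.t i)| := by
      refine Finset.sum_congr rfl fun i hi => ?_
      have hi' : i < m := Finset.mem_range.mp hi
      rw [hT1 i (by omega), hT1 (i + 1) (by omega)]
    have e2 : ∑ i ∈ Finset.range (P2.k + 1), |f (T (m + i + 1)) - f (T (m + i))| =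
        ∑ i ∈ Finset.range (P2.k + 1), |f (P2.t (i + 1)) - f (P2.t i)| := by
      refine Finset.sum_congr rfl fun i _ => ?_
      rw [show m + i + 1 = m + (i + 1) from rfl, hT2, hT2]
    rw [e1, e2, phiP, phiP]
    push_cast
    ring

/-- Splitting a partition of `[a,c]` at `b`. -/
lemma phiP_split (lam a b c : ℝ) (hlam : 0 < lam) (f : ℝ → ℝ) (hab : a < b) (hbc : b < c)
    (Q : RTVPartition a c) :
    ∃ (P1 : RTVPartition a b) (P2 : RTVPartition b c),
      phiP lam a c f Q ≤ phiP lam a b f P1 + phiP lam b c f P2 := by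
  classical
  set k := Q.k with hk
  have h0 : Q.t 0 < b := by rw [Q.ht0]; exact hab
  have hspec : Q.t (Nat.findGreatest (fun i => Q.t i < b) (k + 1)) < b :=
    Nat.findGreatest_spec (P := fun i => Q.t i < b) (m := 0) (Nat.zero_le _) h0
  have hjle : Nat.findGreatest (fun i => Q.t i < b) (k + 1) ≤ k + 1 :=
    Nat.findGreatest_le (P := fun i => Q.t i < b) _
  have hjk0 : Nat.findGreatest (fun i => Q.t i < b) (k + 1) ≤ k := by
    by_contra h
    have he : Nat.findGreatest (fun i => Q.t i < b) (k + 1) = k + 1 := by omega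
    rw [he, Q.htlast] at hspec
    linarith
  have hb0 : b ≤ Q.t (Nat.findGreatest (fun i => Q.t i < b) (k + 1) + 1) := by
    by_contra h
    push_neg at h
    exact Nat.findGreatest_is_greatest (P := fun i => Q.t i < b)
      (Nat.lt_succ_self _) (by omega) h
  obtain ⟨j, hjk, hjb, hb⟩ : ∃ j, j ≤ k ∧ Q.t j < b ∧ b ≤ Q.t (j + 1) :=
    ⟨_, hjk0, hspec, hb0⟩
  rcases eq_or_lt_of_le hb with heq | hlt
  · -- b = Q.t (j+1) : partition point coincides with b
    have hjk' : j + 1 ≤ k := by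
      by_contra h
      have hje : j = k := by omega
      rw [hje, Q.htlast] at heq
      linarith
    refine ⟨⟨j, Q.t, Q.ht0, heq.symm, fun i hi => Q.hmono i (by omega)⟩,
      ⟨k - (j + 1), fun i => Q.t (j + 1 + i),
        by show Q.t (j + 1 + 0) = b; exact heq.symm,
        by show Q.t (j + 1 + (k - (j + 1) + 1)) = c
           rw [show j + 1 + (k - (j + 1) + 1) = k + 1 by omega, Q.htlast],
        fun i hi => by
          show Q.t (j + 1 + i) < Q.t (j + 1 + (i + 1))
          exact Q.hmono (j + 1 + i) (by omega)⟩, ?_⟩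
    show (∑ i ∈ Finset.range (k + 1), |f (Q.t (i + 1)) - f (Q.t i)|) - lam * (k : ℝ) ≤
        ((∑ i ∈ Finset.range (j + 1), |f (Q.t (i + 1)) - f (Q.t i)|) - lam * (j : ℝ)) +
        ((∑ i ∈ Finset.range (k - (j + 1) + 1),
            |f (Q.t (j + 1 + (i + 1))) - f (Q.t (j + 1 + i))|)
          - lam * ((k - (j + 1) : ℕ) : ℝ))
    have hsum : ∑ i ∈ Finset.range (k + 1), |f (Q.t (i + 1)) - f (Q.t i)| =
        (∑ i ∈ Finset.range (j + 1), |f (Q.t (i + 1)) - f (Q.t i)|) +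
        ∑ i ∈ Finset.range (k - (j + 1) + 1),
          |f (Q.t (j + 1 + (i + 1))) - f (Q.t (j + 1 + i))| := by
      rw [show k + 1 = (j + 1) + (k - (j + 1) + 1) by omega, Finset.sum_range_add]
      rfl
    have hcast : ((k - (j + 1) : ℕ) : ℝ) = (k : ℝ) - (j : ℝ) - 1 := by
      rw [Nat.cast_sub (by omega)]
      push_cast
      ring
    rw [hsum, hcast]
    linarith [hlam.le]
  · -- Q.t j < b < Q.t (j+1) : insert b as a new point
    refine ⟨⟨j, fun i => if i ≤ j then Q.t i else b,
        by show (if (0 : ℕ) ≤ j then Q.t 0 else b) = a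
           rw [if_pos (Nat.zero_le _), Q.ht0],
        by show (if j + 1 ≤ j then Q.t (j + 1) else b) = b
           rw [if_neg (by omega)],
        fun i hi => by
          show (if i ≤ j then Q.t i else b) < (if i + 1 ≤ j then Q.t (i + 1) else b)
          rcases Nat.lt_or_ge i j with h | h
          · rw [if_pos hi, if_pos (by omega)]
            exact Q.hmono i (by omega)
          · have hij : i = j := by omega
            subst hij
            rw [if_pos le_rfl, if_neg (by omega)]
            exact hjb⟩,
      ⟨k - j, fun i => if i = 0 then b else Q.t (j + i),
        by show (if (0 : ℕ) = 0 then b else Q.t (j + 0)) = b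
           rw [if_pos rfl],
        by show (if k - j + 1 = 0 then b else Q.t (j + (k - j + 1))) = c
           rw [if_neg (by omega), show j + (k - j + 1) = k + 1 by omega, Q.htlast],
        fun i hi => by
          show (if i = 0 then b else Q.t (j + i)) < (if i + 1 = 0 then b else Q.t (j + (i + 1)))
          rcases Nat.eq_zero_or_pos i with h | h
          · subst h
            rw [if_pos rfl, if_neg (by omega), show j + (0 + 1) = j + 1 by omega]
            exact hlt
          · rw [if_neg (by omega), if_neg (by omega),
              show j + (i + 1) = j + i + 1 by omega]
            exact Q.hmono (j + i) (by omega)⟩, ?_⟩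
    show (∑ i ∈ Finset.range (k + 1), |f (Q.t (i + 1)) - f (Q.t i)|) - lam * (k : ℝ) ≤
        ((∑ i ∈ Finset.range (j + 1),
            |f (if i + 1 ≤ j then Q.t (i + 1) else b) - f (if i ≤ j then Q.t i else b)|)
          - lam * (j : ℝ)) +
        ((∑ i ∈ Finset.range (k - j + 1),
            |f (if i + 1 = 0 then b else Q.t (j + (i + 1)))
              - f (if i = 0 then b else Q.t (j + i))|)
          - lam * ((k - j : ℕ) : ℝ))
    have e1 : ∑ i ∈ Finset.range (j + 1),
        |f (if i + 1 ≤ j then Q.t (i + 1) else b) - f (if i ≤ j then Q.t i else b)| =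
        (∑ i ∈ Finset.range j, |f (Q.t (i + 1)) - f (Q.t i)|) + |f b - f (Q.t j)| := by
      rw [Finset.sum_range_succ, if_neg (by omega), if_pos le_rfl]
      congr 1
      refine Finset.sum_congr rfl fun i hi => ?_
      have hij : i < j := Finset.mem_range.mp hi
      rw [if_pos (by omega), if_pos (by omega)]
    have e2 : ∑ i ∈ Finset.range (k - j + 1),
        |f (if i + 1 = 0 then b else Q.t (j + (i + 1)))
          - f (if i = 0 then b else Q.t (j + i))| =
        (∑ i ∈ Finset.range (k - j), |f (Q.t (j + 1 + i + 1)) - f (Q.t (j + 1 + i))|)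
          + |f (Q.t (j + 1)) - f b| := by
      rw [Finset.sum_range_succ']
      congr 1
      · refine Finset.sum_congr rfl fun i hi => ?_
        rw [if_neg (by omega), if_neg (by omega),
          show j + (i + 1 + 1) = j + 1 + i + 1 by omega,
          show j + (i + 1) = j + 1 + i by omega]
    have hsum : ∑ i ∈ Finset.range (k + 1), |f (Q.t (i + 1)) - f (Q.t i)| =
        ((∑ i ∈ Finset.range j, |f (Q.t (i + 1)) - f (Q.t i)|)
          + |f (Q.t (j + 1)) - f (Q.t j)|) +
        ∑ i ∈ Finset.range (k - j), |f (Q.t (j + 1 + i + 1)) - f (Q.t (j + 1 + i))| := by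
      rw [show k + 1 = (j + 1) + (k - j) by omega, Finset.sum_range_add, Finset.sum_range_succ]
    have htri : |f (Q.t (j + 1)) - f (Q.t j)| ≤
        |f (Q.t (j + 1)) - f b| + |f b - f (Q.t j)| := abs_sub_le _ _ _
    have hcast : ((k - j : ℕ) : ℝ) = (k : ℝ) - (j : ℝ) := by
      rw [Nat.cast_sub hjk]
    rw [e1, e2, hsum, hcast]
    linarith

/-- Near-additivity of the regularized total variation under splitting the interval:
`Φ_{[a,b],λ}(f) + Φ_{[b,c],λ}(f) − λ ≤ Φ_{[a,c],λ}(f) ≤ Φ_{[a,b],λ}(f) + Φ_{[b,c],λ}(f)`. -/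
theorem phiRTV_split (lam a b c : ℝ) (hlam : 0 < lam) (hab : a < b) (hbc : b < c)
    (f : ℝ → ℝ) (hf : ContinuousOn f (Icc a c)) :
    phiRTV lam a b f + phiRTV lam b c f - lam ≤ phiRTV lam a c f ∧
    phiRTV lam a c f ≤ phiRTV lam a b f + phiRTV lam b c f := by
  have hf1 : ContinuousOn f (Icc a b) := hf.mono (Icc_subset_Icc le_rfl hbc.le)
  have hf2 : ContinuousOn f (Icc b c) := hf.mono (Icc_subset_Icc hab.le le_rfl)
  haveI ne1 : Nonempty (RTVPartition a b) := RTVPartition.nonempty' hab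
  haveI ne2 : Nonempty (RTVPartition b c) := RTVPartition.nonempty' hbc
  haveI ne3 : Nonempty (RTVPartition a c) := RTVPartition.nonempty' (hab.trans hbc)
  have bdd1 := phiP_bddAbove lam a b hlam f hf1
  have bdd2 := phiP_bddAbove lam b c hlam f hf2
  have bdd3 := phiP_bddAbove lam a c hlam f hf
  constructor
  · have h1 : ∀ (P1 : RTVPartition a b) (P2 : RTVPartition b c),
        phiP lam a b f P1 + phiP lam b c f P2 - lam ≤ phiRTV lam a c f := by
      intro P1 P2
      obtain ⟨Q, hQ⟩ := phiP_concat lam a b c f hab hbc P1 P2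
      rw [← hQ]
      exact le_ciSup bdd3 Q
    have h2 : phiRTV lam a b f ≤ phiRTV lam a c f + lam - phiRTV lam b c f := by
      refine ciSup_le fun P1 => ?_
      have h3 : phiRTV lam b c f ≤ phiRTV lam a c f + lam - phiP lam a b f P1 :=
        ciSup_le fun P2 => by linarith [h1 P1 P2]
      linarith
    linarith
  · refine ciSup_le fun Q => ?_
    obtain ⟨P1, P2, h⟩ := phiP_split lam a b c hlam f hab hbc Q
    calc phiP lam a c f Q ≤ phiP lam a b f P1 + phiP lam b c f P2 := h
      _ ≤ _ := add_le_add (le_ciSup bdd1 P1) (le_ciSup bdd2 P2)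
end
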